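/- Let m ≥ 1, let Ω ⊆ ℝ^{m+1} be open, and let u, v : ℝ^{m+1} → ℝ be twice continuously differentiable on Ω and harmonic on Ω. Writing points of ℝ^{m+1} as (x,y) with x ∈ ℝ^m and y ∈ ℝ, and writing ∇ₓ for the gradient in the x-variables and divₓ for the divergence in the x-variables, one has on Ω: divₓ((∂_y u) ∇ₓ v + (∂_y v) ∇ₓ u) + ∂_y((∂_y u)(∂_y v) − ∇ₓ u · ∇ₓ v) = 0. -/

import Mathlib

open Filter Topology

/-- Partial derivative in the `i`-th horizontal coordinate of a function on `ℝ^m × ℝ`. -/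
noncomputable def pdx (m : ℕ) (i : Fin m) (f : (Fin m → ℝ) × ℝ → ℝ)
    (p : (Fin m → ℝ) × ℝ) : ℝ :=
  deriv (fun s => f (Function.update p.1 i s, p.2)) (p.1 i)

/-- Partial derivative in the vertical coordinate of a function on `ℝ^m × ℝ`. -/
noncomputable def pdy (m : ℕ) (f : (Fin m → ℝ) × ℝ → ℝ) (p : (Fin m → ℝ) × ℝ) : ℝ :=
  deriv (fun s => f (p.1, s)) p.2

namespace Statement1Aux

variable {m : ℕ}

/-- The horizontal basis direction. -/
noncomputable def wx (m : ℕ) (i : Fin m) : (Fin m → ℝ) × ℝ := (Pi.single i 1, 0)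

/-- The vertical direction. -/
noncomputable def wy (m : ℕ) : (Fin m → ℝ) × ℝ := ((0 : Fin m → ℝ), 1)

lemma curve_x (p : (Fin m → ℝ) × ℝ) (i : Fin m) (s : ℝ) :
    ((Function.update p.1 i s, p.2) : (Fin m → ℝ) × ℝ) = p + (s - p.1 i) • wx m i := by
  refine Prod.ext ?_ ?_
  · funext j
    by_cases h : j = i
    · subst h; simp [wx]
    · simp [wx, Function.update_apply, h, Pi.single_apply]
  · simp [wx]

lemma curve_y (p : (Fin m → ℝ) × ℝ) (s : ℝ) :
    ((p.1, s) : (Fin m → ℝ) × ℝ) = p + (s - p.2) • wy m := by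
  refine Prod.ext ?_ ?_ <;> simp [wy]

lemma line_hasDerivAt (p w : (Fin m → ℝ) × ℝ) (c s : ℝ) :
    HasDerivAt (fun s : ℝ => p + (s - c) • w) w s := by
  simpa using (((hasDerivAt_id s).sub_const c).smul_const w).const_add p

lemma pdx_eq_fderiv (i : Fin m) (f : (Fin m → ℝ) × ℝ → ℝ) (p : (Fin m → ℝ) × ℝ)
    (hf : DifferentiableAt ℝ f p) :
    pdx m i f p = fderiv ℝ f p (wx m i) := by
  have h1 : HasDerivAt (fun s : ℝ => f (p + (s - p.1 i) • wx m i))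
      (fderiv ℝ f p (wx m i)) (p.1 i) := by
    have hline := line_hasDerivAt p (wx m i) (p.1 i) (p.1 i)
    have hfd : HasFDerivAt f (fderiv ℝ f p) (p + ((p.1 i) - p.1 i) • wx m i) := by
      simpa using hf.hasFDerivAt
    exact hfd.comp_hasDerivAt (p.1 i) hline
  have h2 : HasDerivAt (fun s : ℝ => f (Function.update p.1 i s, p.2))
      (fderiv ℝ f p (wx m i)) (p.1 i) := by
    convert h1 using 2 with s
    rw [curve_x]
  exact h2.deriv

lemma pdy_eq_fderiv (f : (Fin m → ℝ) × ℝ → ℝ) (p : (Fin m → ℝ) × ℝ)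
    (hf : DifferentiableAt ℝ f p) :
    pdy m f p = fderiv ℝ f p (wy m) := by
  have h1 : HasDerivAt (fun s : ℝ => f (p + (s - p.2) • wy m))
      (fderiv ℝ f p (wy m)) p.2 := by
    have hline := line_hasDerivAt p (wy m) p.2 p.2
    have hfd : HasFDerivAt f (fderiv ℝ f p) (p + (p.2 - p.2) • wy m) := by
      simpa using hf.hasFDerivAt
    exact hfd.comp_hasDerivAt p.2 hline
  have h2 : HasDerivAt (fun s : ℝ => f (p.1, s)) (fderiv ℝ f p (wy m)) p.2 := by
    convert h1 using 2 with s
    rw [curve_y]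
  exact h2.deriv

lemma pdx_congr (i : Fin m) {f g : (Fin m → ℝ) × ℝ → ℝ} {p : (Fin m → ℝ) × ℝ}
    (h : f =ᶠ[𝓝 p] g) : pdx m i f p = pdx m i g p := by
  unfold pdx
  apply Filter.EventuallyEq.deriv_eq
  have hc : Continuous (fun s : ℝ => ((Function.update p.1 i s, p.2) : (Fin m → ℝ) × ℝ)) := by
    have : (fun s : ℝ => ((Function.update p.1 i s, p.2) : (Fin m → ℝ) × ℝ)) =
        fun s : ℝ => p + (s - p.1 i) • wx m i := by
      funext s; exact curve_x p i s
    rw [this]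
    fun_prop
  have hval : ((Function.update p.1 i (p.1 i), p.2) : (Fin m → ℝ) × ℝ) = p := by
    rw [Function.update_eq_self]
  have htend : Tendsto (fun s : ℝ => ((Function.update p.1 i s, p.2) : (Fin m → ℝ) × ℝ))
      (𝓝 (p.1 i)) (𝓝 p) := by
    have := hc.tendsto (p.1 i)
    rwa [hval] at this
  exact h.comp_tendsto htend

lemma pdy_congr {f g : (Fin m → ℝ) × ℝ → ℝ} {p : (Fin m → ℝ) × ℝ}
    (h : f =ᶠ[𝓝 p] g) : pdy m f p = pdy m g p := by
  unfold pdy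
  apply Filter.EventuallyEq.deriv_eq
  have htend : Tendsto (fun s : ℝ => ((p.1, s) : (Fin m → ℝ) × ℝ)) (𝓝 p.2) (𝓝 p) := by
    have hc : Continuous (fun s : ℝ => ((p.1, s) : (Fin m → ℝ) × ℝ)) := by fun_prop
    exact hc.tendsto p.2
  exact h.comp_tendsto htend

lemma dir_hasFDerivAt {f : (Fin m → ℝ) × ℝ → ℝ} {p : (Fin m → ℝ) × ℝ}
    (hf : ContDiffAt ℝ 2 f p) (w : (Fin m → ℝ) × ℝ) :
    HasFDerivAt (fun q => fderiv ℝ f q w)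
      ((ContinuousLinearMap.apply ℝ ℝ w).comp (fderiv ℝ (fderiv ℝ f) p)) p := by
  have hdf : DifferentiableAt ℝ (fderiv ℝ f) p :=
    (hf.fderiv_right (m := 1) (by norm_num)).differentiableAt (by norm_num)
  exact (ContinuousLinearMap.apply ℝ ℝ w).hasFDerivAt.comp p hdf.hasFDerivAt

lemma dir_differentiableAt {f : (Fin m → ℝ) × ℝ → ℝ} {p : (Fin m → ℝ) × ℝ}
    (hf : ContDiffAt ℝ 2 f p) (w : (Fin m → ℝ) × ℝ) :
    DifferentiableAt ℝ (fun q => fderiv ℝ f q w) p :=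
  (dir_hasFDerivAt hf w).differentiableAt

lemma dir_fderiv {f : (Fin m → ℝ) × ℝ → ℝ} {p : (Fin m → ℝ) × ℝ}
    (hf : ContDiffAt ℝ 2 f p) (w w' : (Fin m → ℝ) × ℝ) :
    fderiv ℝ (fun q => fderiv ℝ f q w) p w' = fderiv ℝ (fderiv ℝ f) p w' w := by
  rw [(dir_hasFDerivAt hf w).fderiv]
  rfl

end Statement1Aux

set_option maxHeartbeats 2000000 in
open Statement1Aux in
/-- higher-dimensional divergence identity for harmonic functions:
`divₓ((∂_y u) ∇ₓ v + (∂_y v) ∇ₓ u) + ∂_y((∂_y u)(∂_y v) − ∇ₓ u · ∇ₓ v) = 0` on `Ω`. -/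
theorem statement1 (m : ℕ) (hm : 1 ≤ m) (Ω : Set ((Fin m → ℝ) × ℝ)) (hΩ : IsOpen Ω)
    (u v : (Fin m → ℝ) × ℝ → ℝ)
    (hu : ContDiffOn ℝ 2 u Ω) (hv : ContDiffOn ℝ 2 v Ω)
    (hharmu : ∀ p ∈ Ω, (∑ i, pdx m i (pdx m i u) p) + pdy m (pdy m u) p = 0)
    (hharmv : ∀ p ∈ Ω, (∑ i, pdx m i (pdx m i v) p) + pdy m (pdy m v) p = 0) :
    ∀ p ∈ Ω,
      (∑ i, pdx m i (fun q => pdy m u q * pdx m i v q + pdy m v q * pdx m i u q) p) +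
        pdy m (fun q => pdy m u q * pdy m v q - ∑ i, pdx m i u q * pdx m i v q) p = 0 := by
  intro p hp
  have hu2 : ContDiffAt ℝ 2 u p := hu.contDiffAt (hΩ.mem_nhds hp)
  have hv2 : ContDiffAt ℝ 2 v p := hv.contDiffAt (hΩ.mem_nhds hp)
  -- eventual identification of pdx/pdy with directional fderiv
  have hUw : ∀ w : (Fin m → ℝ) × ℝ, ∀ q ∈ Ω, DifferentiableAt ℝ u q := by
    intro w q hq
    exact ((hu.contDiffAt (hΩ.mem_nhds hq)).differentiableAt (by norm_num))
  have hVw : ∀ q ∈ Ω, DifferentiableAt ℝ v q := by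
    intro q hq
    exact ((hv.contDiffAt (hΩ.mem_nhds hq)).differentiableAt (by norm_num))
  have hUy : (fun q => pdy m u q) =ᶠ[𝓝 p] fun q => fderiv ℝ u q (wy m) := by
    filter_upwards [hΩ.mem_nhds hp] with q hq
    exact pdy_eq_fderiv u q (hUw 0 q hq)
  have hVy : (fun q => pdy m v q) =ᶠ[𝓝 p] fun q => fderiv ℝ v q (wy m) := by
    filter_upwards [hΩ.mem_nhds hp] with q hq
    exact pdy_eq_fderiv v q (hVw q hq)
  have hUx : ∀ i : Fin m, (fun q => pdx m i u q) =ᶠ[𝓝 p] fun q => fderiv ℝ u q (wx m i) := by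
    intro i
    filter_upwards [hΩ.mem_nhds hp] with q hq
    exact pdx_eq_fderiv i u q (hUw 0 q hq)
  have hVx : ∀ i : Fin m, (fun q => pdx m i v q) =ᶠ[𝓝 p] fun q => fderiv ℝ v q (wx m i) := by
    intro i
    filter_upwards [hΩ.mem_nhds hp] with q hq
    exact pdx_eq_fderiv i v q (hVw q hq)
  -- abbreviations
  set U1 := fderiv ℝ u p with hU1
  set V1 := fderiv ℝ v p with hV1
  set U2 := fderiv ℝ (fderiv ℝ u) p with hU2
  set V2 := fderiv ℝ (fderiv ℝ v) p with hV2
  have hsymU : ∀ a b, U2 a b = U2 b a := hu2.isSymmSndFDerivAt (by simp [minSmoothness_of_isRCLikeNormedField])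
  have hsymV : ∀ a b, V2 a b = V2 b a := hv2.isSymmSndFDerivAt (by simp [minSmoothness_of_isRCLikeNormedField])
  -- compute second-order pdx/pdy of u and v
  have key2 : ∀ (f : (Fin m → ℝ) × ℝ → ℝ) (hf : ContDiffAt ℝ 2 f p)
      (hfe : ∀ q ∈ Ω, DifferentiableAt ℝ f q) (w w' : (Fin m → ℝ) × ℝ)
      (g : (Fin m → ℝ) × ℝ → ℝ)
      (hg : g =ᶠ[𝓝 p] fun q => fderiv ℝ f q w),
      True := fun _ _ _ _ _ _ _ => trivial
  clear key2
  have hppdxU : ∀ i : Fin m, pdx m i (pdx m i u) p = U2 (wx m i) (wx m i) := by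
    intro i
    rw [pdx_congr i (hUx i), pdx_eq_fderiv i _ p (dir_differentiableAt hu2 (wx m i)),
      dir_fderiv hu2]
  have hppdyU : pdy m (pdy m u) p = U2 (wy m) (wy m) := by
    rw [pdy_congr hUy, pdy_eq_fderiv _ p (dir_differentiableAt hu2 (wy m)), dir_fderiv hu2]
  have hppdxV : ∀ i : Fin m, pdx m i (pdx m i v) p = V2 (wx m i) (wx m i) := by
    intro i
    rw [pdx_congr i (hVx i), pdx_eq_fderiv i _ p (dir_differentiableAt hv2 (wx m i)),
      dir_fderiv hv2]
  have hppdyV : pdy m (pdy m v) p = V2 (wy m) (wy m) := by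
    rw [pdy_congr hVy, pdy_eq_fderiv _ p (dir_differentiableAt hv2 (wy m)), dir_fderiv hv2]
  have hharmU : (∑ i, U2 (wx m i) (wx m i)) + U2 (wy m) (wy m) = 0 := by
    have := hharmu p hp
    rwa [Finset.sum_congr rfl (fun i _ => hppdxU i), hppdyU] at this
  have hharmV : (∑ i, V2 (wx m i) (wx m i)) + V2 (wy m) (wy m) = 0 := by
    have := hharmv p hp
    rwa [Finset.sum_congr rfl (fun i _ => hppdxV i), hppdyV] at this
  -- first big term
  have hterm1 : ∀ i : Fin m,
      pdx m i (fun q => pdy m u q * pdx m i v q + pdy m v q * pdx m i u q) p =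
        U2 (wx m i) (wy m) * V1 (wx m i) + U1 (wy m) * V2 (wx m i) (wx m i) +
        (V2 (wx m i) (wy m) * U1 (wx m i) + V1 (wy m) * U2 (wx m i) (wx m i)) := by
    intro i
    have heq : (fun q => pdy m u q * pdx m i v q + pdy m v q * pdx m i u q) =ᶠ[𝓝 p]
        (fun q => fderiv ℝ u q (wy m) * fderiv ℝ v q (wx m i) +
          fderiv ℝ v q (wy m) * fderiv ℝ u q (wx m i)) :=
      (hUy.mul (hVx i)).add (hVy.mul (hUx i))
    rw [pdx_congr i heq]
    have d1 := dir_differentiableAt hu2 (wy m)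
    have d2 := dir_differentiableAt hv2 (wx m i)
    have d3 := dir_differentiableAt hv2 (wy m)
    have d4 := dir_differentiableAt hu2 (wx m i)
    rw [pdx_eq_fderiv i (fun q => fderiv ℝ u q (wy m) * fderiv ℝ v q (wx m i) +
      fderiv ℝ v q (wy m) * fderiv ℝ u q (wx m i)) p (((d1.mul d2)).add (d3.mul d4))]
    rw [fderiv_fun_add (f := fun q => fderiv ℝ u q (wy m) * fderiv ℝ v q (wx m i))
      (g := fun q => fderiv ℝ v q (wy m) * fderiv ℝ u q (wx m i)) (d1.mul d2) (d3.mul d4), fderiv_fun_mul d1 d2, fderiv_fun_mul d3 d4]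
    simp only [ContinuousLinearMap.add_apply, ContinuousLinearMap.smul_apply,
      ContinuousLinearMap.coe_smul', Pi.smul_apply, smul_eq_mul]
    rw [dir_fderiv hu2, dir_fderiv hv2, dir_fderiv hu2, dir_fderiv hv2]
    ring
  -- second big term
  have hterm2 :
      pdy m (fun q => pdy m u q * pdy m v q - ∑ i, pdx m i u q * pdx m i v q) p =
        U2 (wy m) (wy m) * V1 (wy m) + U1 (wy m) * V2 (wy m) (wy m) -
          ∑ i, (U2 (wy m) (wx m i) * V1 (wx m i) + U1 (wx m i) * V2 (wy m) (wx m i)) := by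
    have heq : (fun q => pdy m u q * pdy m v q - ∑ i, pdx m i u q * pdx m i v q) =ᶠ[𝓝 p]
        (fun q => fderiv ℝ u q (wy m) * fderiv ℝ v q (wy m) -
          ∑ i, fderiv ℝ u q (wx m i) * fderiv ℝ v q (wx m i)) := by
      have hsum : (fun q => ∑ i, pdx m i u q * pdx m i v q) =ᶠ[𝓝 p]
          (fun q => ∑ i, fderiv ℝ u q (wx m i) * fderiv ℝ v q (wx m i)) := by
        filter_upwards [hΩ.mem_nhds hp] with q hq
        refine Finset.sum_congr rfl fun i _ => ?_
        rw [pdx_eq_fderiv i u q (hUw 0 q hq), pdx_eq_fderiv i v q (hVw q hq)]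
      exact (hUy.mul hVy).sub hsum
    rw [pdy_congr heq]
    have d1 := dir_differentiableAt hu2 (wy m)
    have d3 := dir_differentiableAt hv2 (wy m)
    have dsum : ∀ i : Fin m, DifferentiableAt ℝ
        (fun q => fderiv ℝ u q (wx m i) * fderiv ℝ v q (wx m i)) p := fun i =>
      (dir_differentiableAt hu2 (wx m i)).mul (dir_differentiableAt hv2 (wx m i))
    have dS : DifferentiableAt ℝ
        (fun q => ∑ i, fderiv ℝ u q (wx m i) * fderiv ℝ v q (wx m i)) p := by
      apply DifferentiableAt.fun_sum
      intro i _
      exact dsum i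
    rw [pdy_eq_fderiv (fun q => fderiv ℝ u q (wy m) * fderiv ℝ v q (wy m) -
      ∑ i, fderiv ℝ u q (wx m i) * fderiv ℝ v q (wx m i)) p ((d1.mul d3).sub dS)]
    rw [fderiv_fun_sub (f := fun q => fderiv ℝ u q (wy m) * fderiv ℝ v q (wy m)) (d1.mul d3) dS, fderiv_fun_mul d1 d3,
      fderiv_fun_sum (fun i _ => dsum i)]
    simp only [ContinuousLinearMap.sub_apply, ContinuousLinearMap.add_apply,
      ContinuousLinearMap.smul_apply, ContinuousLinearMap.coe_sum', Finset.sum_apply,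
      smul_eq_mul]
    rw [dir_fderiv hu2, dir_fderiv hv2]
    congr 1
    · ring
    refine Finset.sum_congr rfl fun i _ => ?_
    rw [fderiv_fun_mul (dir_differentiableAt hu2 (wx m i)) (dir_differentiableAt hv2 (wx m i))]
    simp only [ContinuousLinearMap.add_apply, ContinuousLinearMap.smul_apply, smul_eq_mul]
    rw [dir_fderiv hu2, dir_fderiv hv2]
    ring
  rw [Finset.sum_congr rfl (fun i _ => hterm1 i), hterm2]
  -- use symmetry of second derivatives
  have hsum1 : ∑ i, (U2 (wx m i) (wy m) * V1 (wx m i) + U1 (wy m) * V2 (wx m i) (wx m i) +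
      (V2 (wx m i) (wy m) * U1 (wx m i) + V1 (wy m) * U2 (wx m i) (wx m i))) =
      (∑ i, U2 (wy m) (wx m i) * V1 (wx m i)) + U1 (wy m) * ∑ i, V2 (wx m i) (wx m i) +
      ((∑ i, V2 (wy m) (wx m i) * U1 (wx m i)) + V1 (wy m) * ∑ i, U2 (wx m i) (wx m i)) := by
    rw [Finset.mul_sum, Finset.mul_sum, ← Finset.sum_add_distrib, ← Finset.sum_add_distrib,
      ← Finset.sum_add_distrib]
    refine Finset.sum_congr rfl fun i _ => ?_
    rw [hsymU (wx m i) (wy m), hsymV (wx m i) (wy m)]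
  rw [hsum1, Finset.sum_add_distrib]
  have expand : ∑ i, U1 (wx m i) * V2 (wy m) (wx m i) =
      ∑ i, V2 (wy m) (wx m i) * U1 (wx m i) := by
    refine Finset.sum_congr rfl fun i _ => mul_comm _ _
  rw [expand]
  linear_combination U1 (wy m) * hharmV + V1 (wy m) * hharmU
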